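/- The hypersurface associated to the tropicalization of a product of two nonzero Laurent polynomials is the union of the hypersurfaces associated to the tropicalizations of the factors: for nonzero Laurent polynomials f, g in N variables over the valued field K, V(T(fg)) = V(Tf) ∪ V(Tg). -/

import Mathlib

open Finset Pointwise

/-- The tropical dot product `α·γ = ∑ i, α i • γ i`. -/
noncomputable def tropDot {Γ : Type*} [AddCommGroup Γ] [LinearOrder Γ] [IsOrderedAddMonoid Γ] {N : ℕ}
    (α : Fin N → ℤ) (γ : Fin N → Γ) : Γ :=
  ∑ i, α i • γ i

/-- The tropicalization of a Laurent polynomial `f` (an element of the group algebra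
`K[ℤ^N]`), evaluated at `γ ∈ Γ^N`:  `Tf(γ) = min_{α ∈ E(f)} (val φ_α + α·γ)`,
computed in `Γ ∪ {∞}` (the min over the empty set is `∞`). -/
noncomputable def tropicalize {Γ : Type*} [AddCommGroup Γ] [LinearOrder Γ] [IsOrderedAddMonoid Γ]
    {K : Type*} [Field K] {N : ℕ} (val : K → WithTop Γ)
    (f : AddMonoidAlgebra K (Fin N → ℤ)) (γ : Fin N → Γ) : WithTop Γ :=
  f.coeff.support.inf fun α => val (f.coeff α) + WithTop.some (tropDot α γ)

/-- `D_γ(Tf)`: the set of exponents of `f` at which the minimum defining `Tf(γ)`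
is attained. -/
def tropD {Γ : Type*} [AddCommGroup Γ] [LinearOrder Γ] [IsOrderedAddMonoid Γ] {K : Type*} [Field K] {N : ℕ}
    (val : K → WithTop Γ) (f : AddMonoidAlgebra K (Fin N → ℤ))
    (γ : Fin N → Γ) : Set (Fin N → ℤ) :=
  {α | α ∈ f.coeff.support ∧ tropicalize val f γ = val (f.coeff α) + WithTop.some (tropDot α γ)}

/-- `V(Tf)`: the hypersurface associated to the tropicalization of `f`,
i.e. the points `γ` where the minimum is attained at least twice. -/
def tropV {Γ : Type*} [AddCommGroup Γ] [LinearOrder Γ] [IsOrderedAddMonoid Γ] {K : Type*} [Field K] {N : ℕ}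
    (val : K → WithTop Γ) (f : AddMonoidAlgebra K (Fin N → ℤ)) :
    Set (Fin N → Γ) :=
  {γ | ∃ α β : Fin N → ℤ, α ≠ β ∧ α ∈ tropD val f γ ∧ β ∈ tropD val f γ}

/-- Evaluation of a Laurent polynomial at a point of the torus `(K∖{0})^N`:
`f(x) = ∑_{α ∈ E(f)} φ_α x^α`. -/
noncomputable def lEval {K : Type*} [Field K] {N : ℕ}
    (f : AddMonoidAlgebra K (Fin N → ℤ)) (x : Fin N → Kˣ) : K :=
  ∑ α ∈ f.coeff.support, f.coeff α * ((∏ i, (x i) ^ (α i) : Kˣ) : K)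


section Aux

variable {Γ : Type*} [AddCommGroup Γ] [LinearOrder Γ] [IsOrderedAddMonoid Γ] {K : Type*} [Field K] {N : ℕ}

lemma tropDot_add (α β : Fin N → ℤ) (γ : Fin N → Γ) :
    tropDot (α + β) γ = tropDot α γ + tropDot β γ := by
  simp [tropDot, add_smul, Finset.sum_add_distrib]

/-- `val 1 = 0`. -/
lemma val_one_aux (val : K → WithTop Γ)
    (hval0 : ∀ x : K, val x = ⊤ ↔ x = 0)
    (hvalmul : ∀ x y : K, val (x * y) = val x + val y) : val 1 = 0 := by
  have h1 : val 1 ≠ ⊤ := by simp [hval0]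
  have h : val 1 = val 1 + val 1 := by
    conv_lhs => rw [show (1 : K) = 1 * 1 by ring, hvalmul]
  lift val 1 to Γ using h1 with a ha
  rw [← WithTop.coe_add, WithTop.coe_eq_coe] at h
  exact_mod_cast (add_eq_right.mp h.symm)

/-- `val (-x) = val x`. -/
lemma val_neg_aux (val : K → WithTop Γ)
    (hval0 : ∀ x : K, val x = ⊤ ↔ x = 0)
    (hvalmul : ∀ x y : K, val (x * y) = val x + val y) (x : K) :
    val (-x) = val x := by
  have hm1 : val (-1 : K) = 0 := by
    have h : val (-1 : K) + val (-1 : K) = 0 := by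
      rw [← hvalmul, neg_one_mul, neg_neg, val_one_aux val hval0 hvalmul]
    have hne : val (-1 : K) ≠ ⊤ := by
      intro ht; rw [ht, top_add] at h; exact (by simp : (⊤ : WithTop Γ) ≠ 0) h
    lift val (-1 : K) to Γ using hne with a ha
    rw [← WithTop.coe_add, show (0 : WithTop Γ) = ((0 : Γ) : WithTop Γ) from rfl,
      WithTop.coe_eq_coe] at h
    rw [← WithTop.coe_zero, WithTop.coe_eq_coe]
    rcases lt_trichotomy a 0 with hl | he | hgt
    · exact absurd h (add_neg hl hl).ne
    · exact he
    · exact absurd h (add_pos hgt hgt).ne'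
  calc val (-x) = val ((-1) * x) := by rw [neg_one_mul]
    _ = val (-1 : K) + val x := hvalmul _ _
    _ = val x := by rw [hm1, zero_add]

/-- A lower bound on each term of a sum is a lower bound on the valuation of the sum. -/
lemma val_sum_le_aux (val : K → WithTop Γ)
    (hval0 : ∀ x : K, val x = ⊤ ↔ x = 0)
    (hvaladd : ∀ x y : K, min (val x) (val y) ≤ val (x + y))
    {ι : Type*} (t : Finset ι) (F : ι → K) (v : WithTop Γ)
    (h : ∀ b ∈ t, v ≤ val (F b)) : v ≤ val (∑ b ∈ t, F b) := by
  classical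
  induction t using Finset.cons_induction with
  | empty => simp [(hval0 0).mpr rfl]
  | cons a t ha ih =>
    rw [Finset.sum_cons]
    refine le_trans (le_min (h a (Finset.mem_cons_self a t)) (ih fun b hb => h b ?_))
      (hvaladd _ _)
    exact Finset.mem_cons_of_mem hb

/-- A strict lower bound on each term is a strict lower bound on the valuation of the sum. -/
lemma val_sum_lt_aux (val : K → WithTop Γ)
    (hval0 : ∀ x : K, val x = ⊤ ↔ x = 0)
    (hvaladd : ∀ x y : K, min (val x) (val y) ≤ val (x + y))
    {ι : Type*} (t : Finset ι) (F : ι → K) (v : WithTop Γ) (hv : v ≠ ⊤)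
    (h : ∀ b ∈ t, v < val (F b)) : v < val (∑ b ∈ t, F b) := by
  classical
  induction t using Finset.cons_induction with
  | empty => simpa [(hval0 0).mpr rfl] using lt_top_iff_ne_top.mpr hv
  | cons a t ha ih =>
    rw [Finset.sum_cons]
    refine lt_of_lt_of_le (lt_min (h a (Finset.mem_cons_self a t)) (ih fun b hb => h b ?_))
      (hvaladd _ _)
    exact Finset.mem_cons_of_mem hb

/-- If a single term has strictly minimal valuation, the sum has exactly that valuation. -/
lemma val_sum_unique_aux (val : K → WithTop Γ)
    (hval0 : ∀ x : K, val x = ⊤ ↔ x = 0)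
    (hvalmul : ∀ x y : K, val (x * y) = val x + val y)
    (hvaladd : ∀ x y : K, min (val x) (val y) ≤ val (x + y))
    {ι : Type*} [DecidableEq ι] (t : Finset ι) (F : ι → K) (a : ι) (hat : a ∈ t)
    (hne : val (F a) ≠ ⊤)
    (h : ∀ b ∈ t, b ≠ a → val (F a) < val (F b)) :
    val (∑ b ∈ t, F b) = val (F a) := by
  rw [← Finset.add_sum_erase t F hat]
  set R := ∑ b ∈ t.erase a, F b with hR
  have hRv : val (F a) < val R :=
    val_sum_lt_aux val hval0 hvaladd _ F _ hne fun b hb =>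
      h b (Finset.mem_of_mem_erase hb) (Finset.ne_of_mem_erase hb)
  refine le_antisymm ?_ ?_
  · -- val (F a + R) ≤ val (F a) : else min property violated on (F a + R) + (-R)
    by_contra hlt
    push_neg at hlt
    have h2 : val (F a) = val ((F a + R) + (-R)) := by ring_nf
    have h3 : min (val (F a + R)) (val (-R)) ≤ val (F a) := h2 ▸ hvaladd _ _
    rw [val_neg_aux val hval0 hvalmul] at h3
    exact absurd h3 (not_le.mpr (lt_min hlt hRv))
  · exact le_trans (le_min le_rfl hRv.le) (hvaladd _ _)

/-- The coefficient of a product as a sum over the support of the first factor. -/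
lemma mul_apply_support_aux (f g : AddMonoidAlgebra K (Fin N → ℤ)) (x : Fin N → ℤ) :
    (f * g).coeff x = ∑ α ∈ f.coeff.support, f.coeff α * g.coeff (x - α) := by
  classical
  rw [AddMonoidAlgebra.mul_apply]
  rw [Finsupp.sum]
  refine Finset.sum_congr rfl fun α hα => ?_
  rw [Finsupp.sum]
  have hcongr : (∑ a₂ ∈ g.coeff.support, if α + a₂ = x then f.coeff α * g.coeff a₂ else 0)
      = ∑ a₂ ∈ g.coeff.support, if a₂ = x - α then f.coeff α * g.coeff a₂ else 0 := by
    refine Finset.sum_congr rfl fun a₂ _ => ?_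
    by_cases h : a₂ = x - α
    · rw [if_pos h, if_pos (by rw [h]; abel)]
    · rw [if_neg h, if_neg (fun hc => h (eq_sub_of_add_eq' hc))]
  rw [hcongr]
  rw [Finset.sum_ite_eq' g.coeff.support (x - α) (fun a₂ => f.coeff α * g.coeff a₂)]
  split_ifs with h
  · rfl
  · rw [Finsupp.notMem_support_iff.mp h, mul_zero]

variable (val : K → WithTop Γ)

lemma tropD_nonempty_aux (f : AddMonoidAlgebra K (Fin N → ℤ)) (hf : f ≠ 0) (γ : Fin N → Γ) :
    ∃ α, α ∈ tropD val f γ := by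
  obtain ⟨α, hα, h⟩ := Finset.exists_mem_eq_inf f.coeff.support
    (Finsupp.support_nonempty_iff.mpr (AddMonoidAlgebra.coeff_eq_zero.not.mpr hf))
    (fun α => val (f.coeff α) + WithTop.some (tropDot α γ))
  exact ⟨α, hα, h⟩

lemma trop_le_of_mem_aux (f : AddMonoidAlgebra K (Fin N → ℤ)) (γ : Fin N → Γ)
    (α : Fin N → ℤ) (hα : α ∈ f.coeff.support) :
    tropicalize val f γ ≤ val (f.coeff α) + WithTop.some (tropDot α γ) :=
  Finset.inf_le hα

lemma shift_coe_neg_aux (a : WithTop Γ) (c : Γ) :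
    a + WithTop.some c + WithTop.some (-c) = a := by
  rw [add_assoc, ← WithTop.coe_add, add_neg_cancel, WithTop.coe_zero, add_zero]

/-- `T(fg)(γ) ≥ Tf(γ) + Tg(γ)`, termwise: every coefficient of `f*g` obeys the bound. -/
lemma trop_mul_ge_aux
    (hval0 : ∀ x : K, val x = ⊤ ↔ x = 0)
    (hvalmul : ∀ x y : K, val (x * y) = val x + val y)
    (hvaladd : ∀ x y : K, min (val x) (val y) ≤ val (x + y))
    (f g : AddMonoidAlgebra K (Fin N → ℤ)) (γ : Fin N → Γ) (δ : Fin N → ℤ) :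
    tropicalize val f γ + tropicalize val g γ
      ≤ val ((f * g).coeff δ) + WithTop.some (tropDot δ γ) := by
  set tf := tropicalize val f γ
  set tg := tropicalize val g γ
  set c := tropDot δ γ with hc
  have hterm : ∀ b ∈ f.coeff.support,
      tf + tg + WithTop.some (-c) ≤ val (f.coeff b * g.coeff (δ - b)) := by
    intro b hb
    by_cases hgz : g.coeff (δ - b) = 0
    · rw [hgz, mul_zero, (hval0 0).mpr rfl]; exact le_top
    · have h1 : tf ≤ val (f.coeff b) + WithTop.some (tropDot b γ) :=
        trop_le_of_mem_aux val f γ b hb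
      have h2 : tg ≤ val (g.coeff (δ - b)) + WithTop.some (tropDot (δ - b) γ) :=
        trop_le_of_mem_aux val g γ _ (Finsupp.mem_support_iff.mpr hgz)
      have hsum : tf + tg ≤ val (f.coeff b * g.coeff (δ - b)) + WithTop.some c := by
        calc tf + tg ≤ (val (f.coeff b) + WithTop.some (tropDot b γ))
              + (val (g.coeff (δ - b)) + WithTop.some (tropDot (δ - b) γ)) := add_le_add h1 h2
          _ = (val (f.coeff b) + val (g.coeff (δ - b)))
              + WithTop.some (tropDot b γ + tropDot (δ - b) γ) := by
              rw [WithTop.coe_add]; exact add_add_add_comm _ _ _ _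
          _ = val (f.coeff b * g.coeff (δ - b)) + WithTop.some c := by
              rw [← hvalmul, ← tropDot_add, show b + (δ - b) = δ by abel, ← hc]
      calc tf + tg + WithTop.some (-c)
          ≤ (val (f.coeff b * g.coeff (δ - b)) + WithTop.some c) + WithTop.some (-c) :=
            add_le_add_left hsum _
        _ = val (f.coeff b * g.coeff (δ - b)) := shift_coe_neg_aux _ _
  have := val_sum_le_aux val hval0 hvaladd f.coeff.support (fun b => f.coeff b * g.coeff (δ - b))
    (tf + tg + WithTop.some (-c)) hterm
  rw [← mul_apply_support_aux f g δ] at this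
  calc tf + tg = tf + tg + WithTop.some (-c) + WithTop.some c := by
        rw [add_assoc, ← WithTop.coe_add, neg_add_cancel, WithTop.coe_zero, add_zero]
    _ ≤ val ((f * g).coeff δ) + WithTop.some c := add_le_add_left this _

/-- Strict termwise bound: if `(b, δ - b)` is not a pair of minimizers, the corresponding
term of the coefficient `(fg)_δ` lies strictly above `Tf(γ) + Tg(γ) - δ·γ`. -/
lemma trop_term_strict_aux
    (hval0 : ∀ x : K, val x = ⊤ ↔ x = 0)
    (hvalmul : ∀ x y : K, val (x * y) = val x + val y)
    (f g : AddMonoidAlgebra K (Fin N → ℤ)) (γ : Fin N → Γ)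
    (htf : tropicalize val f γ ≠ ⊤) (htg : tropicalize val g γ ≠ ⊤)
    (δ b : Fin N → ℤ) (hb : b ∈ f.coeff.support)
    (hnotboth : ¬(b ∈ tropD val f γ ∧ δ - b ∈ tropD val g γ)) :
    tropicalize val f γ + tropicalize val g γ
      < val (f.coeff b * g.coeff (δ - b)) + WithTop.some (tropDot δ γ) := by
  set tf := tropicalize val f γ
  set tg := tropicalize val g γ
  by_cases hgz : g.coeff (δ - b) = 0
  · rw [hgz, mul_zero, (hval0 0).mpr rfl, top_add]
    exact lt_top_iff_ne_top.mpr (WithTop.add_ne_top.mpr ⟨htf, htg⟩)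
  · have hgs : δ - b ∈ g.coeff.support := Finsupp.mem_support_iff.mpr hgz
    have h1 : tf ≤ val (f.coeff b) + WithTop.some (tropDot b γ) :=
      trop_le_of_mem_aux val f γ b hb
    have h2 : tg ≤ val (g.coeff (δ - b)) + WithTop.some (tropDot (δ - b) γ) :=
      trop_le_of_mem_aux val g γ _ hgs
    have hone : tf < val (f.coeff b) + WithTop.some (tropDot b γ)
        ∨ tg < val (g.coeff (δ - b)) + WithTop.some (tropDot (δ - b) γ) := by
      by_contra hcon
      push_neg at hcon
      exact hnotboth ⟨⟨hb, le_antisymm h1 hcon.1⟩, ⟨hgs, le_antisymm h2 hcon.2⟩⟩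
    have hsum : tf + tg < (val (f.coeff b) + WithTop.some (tropDot b γ))
        + (val (g.coeff (δ - b)) + WithTop.some (tropDot (δ - b) γ)) := by
      rcases hone with h | h
      · exact WithTop.add_lt_add_of_lt_of_le htg h h2
      · exact WithTop.add_lt_add_of_le_of_lt htf h1 h
    calc tf + tg < (val (f.coeff b) + WithTop.some (tropDot b γ))
          + (val (g.coeff (δ - b)) + WithTop.some (tropDot (δ - b) γ)) := hsum
      _ = (val (f.coeff b) + val (g.coeff (δ - b)))
          + WithTop.some (tropDot b γ + tropDot (δ - b) γ) := by
          rw [WithTop.coe_add]; exact add_add_add_comm _ _ _ _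
      _ = val (f.coeff b * g.coeff (δ - b)) + WithTop.some (tropDot δ γ) := by
          rw [← hvalmul, ← tropDot_add, show b + (δ - b) = δ by abel]

lemma trop_ne_top_aux (hval0 : ∀ x : K, val x = ⊤ ↔ x = 0)
    (f : AddMonoidAlgebra K (Fin N → ℤ)) (γ : Fin N → Γ)
    {α : Fin N → ℤ} (hα : α ∈ tropD val f γ) : tropicalize val f γ ≠ ⊤ := by
  rw [hα.2]
  exact WithTop.add_ne_top.mpr
    ⟨fun h => Finsupp.mem_support_iff.mp hα.1 ((hval0 _).mp h), WithTop.coe_ne_top⟩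

/-- Key lemma: if `(α', β')` is a pair of minimizers for `f` and `g` which is the unique
such pair with sum `α' + β'`, then `α' + β'` is a minimizer for `f * g`, and
`T(fg)(γ) = Tf(γ) + Tg(γ)`. -/
lemma trop_mul_key_aux
    (hval0 : ∀ x : K, val x = ⊤ ↔ x = 0)
    (hvalmul : ∀ x y : K, val (x * y) = val x + val y)
    (hvaladd : ∀ x y : K, min (val x) (val y) ≤ val (x + y))
    (f g : AddMonoidAlgebra K (Fin N → ℤ)) (γ : Fin N → Γ)
    (α' β' : Fin N → ℤ) (hα : α' ∈ tropD val f γ) (hβ : β' ∈ tropD val g γ)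
    (H : ∀ α β : Fin N → ℤ, α ∈ tropD val f γ → β ∈ tropD val g γ →
      α + β = α' + β' → α = α') :
    (α' + β') ∈ tropD val (f * g) γ ∧
      tropicalize val (f * g) γ = tropicalize val f γ + tropicalize val g γ := by
  classical
  set tf := tropicalize val f γ with htfdef
  set tg := tropicalize val g γ with htgdef
  have htf : tf ≠ ⊤ := trop_ne_top_aux val hval0 f γ hα
  have htg : tg ≠ ⊤ := trop_ne_top_aux val hval0 g γ hβ
  have hfa : val (f.coeff α') ≠ ⊤ := fun h => Finsupp.mem_support_iff.mp hα.1 ((hval0 _).mp h)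
  have hgb : val (g.coeff β') ≠ ⊤ := fun h => Finsupp.mem_support_iff.mp hβ.1 ((hval0 _).mp h)
  set δ := α' + β' with hδ
  have hδβ : δ - α' = β' := by rw [hδ]; abel
  -- the distinguished term has value exactly tf + tg (after adding δ·γ)
  have hval_term : val (f.coeff α' * g.coeff β') + WithTop.some (tropDot δ γ) = tf + tg := by
    rw [hvalmul, htfdef, htgdef, hα.2, hβ.2, hδ, tropDot_add, WithTop.coe_add]
    exact (add_add_add_comm _ _ _ _).symm
  -- the coefficient of f*g at δ has valuation exactly val (f.coeff α') + val (g.coeff β')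
  have hcoeff : val ((f * g).coeff δ) = val (f.coeff α' * g.coeff β') := by
    rw [mul_apply_support_aux]
    have := val_sum_unique_aux val hval0 hvalmul hvaladd f.coeff.support
      (fun b => f.coeff b * g.coeff (δ - b)) α' hα.1 ?hne ?hstrict
    · simpa [hδβ] using this
    case hne => simp only [hδβ, hvalmul]; exact WithTop.add_ne_top.mpr ⟨hfa, hgb⟩
    case hstrict =>
      intro b hb hbne
      simp only [hδβ]
      have hnotboth : ¬(b ∈ tropD val f γ ∧ δ - b ∈ tropD val g γ) := by
        rintro ⟨h1, h2⟩
        exact hbne (H b (δ - b) h1 h2 (by rw [hδ]; abel))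
      have := trop_term_strict_aux val hval0 hvalmul f g γ htf htg δ b hb hnotboth
      rw [← hval_term] at this
      exact (WithTop.add_lt_add_iff_right WithTop.coe_ne_top).mp this
  have hδval : val ((f * g).coeff δ) + WithTop.some (tropDot δ γ) = tf + tg := by
    rw [hcoeff]; exact hval_term
  have hδsupp : δ ∈ (f * g).coeff.support := by
    rw [Finsupp.mem_support_iff]
    intro h0
    rw [h0, (hval0 0).mpr rfl] at hcoeff
    exact WithTop.add_ne_top.mpr ⟨hfa, hgb⟩ (by rw [hvalmul] at hcoeff; exact hcoeff.symm)
  have htrop : tropicalize val (f * g) γ = tf + tg := by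
    refine le_antisymm ?_ ?_
    · calc tropicalize val (f * g) γ ≤ val ((f * g).coeff δ) + WithTop.some (tropDot δ γ) :=
          trop_le_of_mem_aux val (f * g) γ δ hδsupp
        _ = tf + tg := hδval
    · exact Finset.le_inf fun δ' hδ' => trop_mul_ge_aux val hval0 hvalmul hvaladd f g γ δ'
  exact ⟨⟨hδsupp, by rw [htrop, ← hδval]⟩, htrop⟩

/-- If the minimizer sets of `f` and `g` are singletons `{α'}` and `{β'}`, then the
minimizer set of `f * g` is contained in `{α' + β'}`. -/
lemma trop_mul_D_subset_aux
    (hval0 : ∀ x : K, val x = ⊤ ↔ x = 0)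
    (hvalmul : ∀ x y : K, val (x * y) = val x + val y)
    (hvaladd : ∀ x y : K, min (val x) (val y) ≤ val (x + y))
    (f g : AddMonoidAlgebra K (Fin N → ℤ)) (γ : Fin N → Γ)
    (α' β' : Fin N → ℤ) (hα : α' ∈ tropD val f γ) (hβ : β' ∈ tropD val g γ)
    (huf : ∀ α ∈ tropD val f γ, α = α') (hug : ∀ β ∈ tropD val g γ, β = β') :
    ∀ δ ∈ tropD val (f * g) γ, δ = α' + β' := by
  classical
  have hkey := trop_mul_key_aux val hval0 hvalmul hvaladd f g γ α' β' hα hβ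
    (fun α β h1 _ _ => huf α h1)
  set tf := tropicalize val f γ
  set tg := tropicalize val g γ
  have htf : tf ≠ ⊤ := trop_ne_top_aux val hval0 f γ hα
  have htg : tg ≠ ⊤ := trop_ne_top_aux val hval0 g γ hβ
  intro δ hδ
  by_contra hne
  -- strict termwise bound for every term of the coefficient at δ
  have hterm : ∀ b ∈ f.coeff.support,
      tf + tg + WithTop.some (-(tropDot δ γ)) < val (f.coeff b * g.coeff (δ - b)) := by
    intro b hb
    have hnotboth : ¬(b ∈ tropD val f γ ∧ δ - b ∈ tropD val g γ) := by
      rintro ⟨h1, h2⟩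
      apply hne
      rw [← huf b h1, ← hug (δ - b) h2]
      abel
    have hst := trop_term_strict_aux val hval0 hvalmul f g γ htf htg δ b hb hnotboth
    have := WithTop.add_lt_add_right (WithTop.coe_ne_top (a := -(tropDot δ γ))) hst
    calc tf + tg + WithTop.some (-(tropDot δ γ))
        < val (f.coeff b * g.coeff (δ - b)) + WithTop.some (tropDot δ γ)
          + WithTop.some (-(tropDot δ γ)) := this
      _ = val (f.coeff b * g.coeff (δ - b)) := shift_coe_neg_aux _ _
  have hlt : tf + tg + WithTop.some (-(tropDot δ γ)) < val ((f * g).coeff δ) := by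
    rw [mul_apply_support_aux]
    exact val_sum_lt_aux val hval0 hvaladd f.coeff.support _ _
      (WithTop.add_ne_top.mpr ⟨WithTop.add_ne_top.mpr ⟨htf, htg⟩, WithTop.coe_ne_top⟩) hterm
  have hlt2 : tf + tg < val ((f * g).coeff δ) + WithTop.some (tropDot δ γ) := by
    have := WithTop.add_lt_add_right (WithTop.coe_ne_top (a := tropDot δ γ)) hlt
    calc tf + tg = tf + tg + WithTop.some (-(tropDot δ γ)) + WithTop.some (tropDot δ γ) := by
          rw [add_assoc, ← WithTop.coe_add, neg_add_cancel, WithTop.coe_zero, add_zero]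
      _ < val ((f * g).coeff δ) + WithTop.some (tropDot δ γ) := this
  rw [← hkey.2, ← hδ.2] at hlt2
  exact lt_irrefl _ hlt2

/-- The lexicographic linear ordered group structure on `ℤ^N`. -/
noncomputable instance lexZN_locag (N : ℕ) : IsOrderedCancelAddMonoid (Lex (Fin N → ℤ)) :=
  inferInstance

/-- The lexicographic linear order on `ℤ^N`. -/
noncomputable instance lexZN_lo (N : ℕ) : LinearOrder (Lex (Fin N → ℤ)) :=
  inferInstance

/-- If `γ` lies on the tropical hypersurface of `f`, it lies on that of `f * g`. -/
lemma tropV_subset_mul_aux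
    (hval0 : ∀ x : K, val x = ⊤ ↔ x = 0)
    (hvalmul : ∀ x y : K, val (x * y) = val x + val y)
    (hvaladd : ∀ x y : K, min (val x) (val y) ≤ val (x + y))
    (f g : AddMonoidAlgebra K (Fin N → ℤ)) (hg : g ≠ 0) :
    tropV val f ⊆ tropV val (f * g) := by
  classical
  intro γ hγ
  obtain ⟨α, β, hαβne, hαm, hβm⟩ := hγ
  obtain ⟨β₀, hβ₀⟩ := tropD_nonempty_aux val g hg γ
  -- minimizer finsets
  set Df : Finset (Fin N → ℤ) := f.coeff.support.filter
    (fun a => tropicalize val f γ = val (f.coeff a) + WithTop.some (tropDot a γ)) with hDfdef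
  set Dg : Finset (Fin N → ℤ) := g.coeff.support.filter
    (fun a => tropicalize val g γ = val (g.coeff a) + WithTop.some (tropDot a γ)) with hDgdef
  have hDf : ∀ a, a ∈ Df ↔ a ∈ tropD val f γ := by
    intro a; simp [hDfdef, tropD, Finset.mem_filter, Set.mem_setOf_eq]
  have hDg : ∀ a, a ∈ Dg ↔ a ∈ tropD val g γ := by
    intro a; simp [hDgdef, tropD, Finset.mem_filter, Set.mem_setOf_eq]
  set sf : Finset (Lex (Fin N → ℤ)) := Df.image toLex with hsfdef
  set sg : Finset (Lex (Fin N → ℤ)) := Dg.image toLex with hsgdef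
  have hsf : sf.Nonempty := ⟨toLex α, Finset.mem_image_of_mem _ ((hDf α).mpr hαm)⟩
  have hsg : sg.Nonempty := ⟨toLex β₀, Finset.mem_image_of_mem _ ((hDg β₀).mpr hβ₀)⟩
  set α₁ : Fin N → ℤ := ofLex (sf.min' hsf) with hα₁
  set α₂ : Fin N → ℤ := ofLex (sf.max' hsf) with hα₂
  set β₁ : Fin N → ℤ := ofLex (sg.min' hsg) with hβ₁
  set β₂ : Fin N → ℤ := ofLex (sg.max' hsg) with hβ₂
  have hmem : ∀ (s : Finset (Lex (Fin N → ℤ))) (x : Lex (Fin N → ℤ)),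
      x ∈ s → s = Df.image toLex → ofLex x ∈ tropD val f γ := by
    intro s x hx hs
    rw [hs] at hx
    obtain ⟨a, ha, hae⟩ := Finset.mem_image.mp hx
    rw [← hae]
    exact (hDf a).mp ha
  have hmemg : ∀ (s : Finset (Lex (Fin N → ℤ))) (x : Lex (Fin N → ℤ)),
      x ∈ s → s = Dg.image toLex → ofLex x ∈ tropD val g γ := by
    intro s x hx hs
    rw [hs] at hx
    obtain ⟨a, ha, hae⟩ := Finset.mem_image.mp hx
    rw [← hae]
    exact (hDg a).mp ha
  have hα₁m : α₁ ∈ tropD val f γ := hmem sf _ (sf.min'_mem hsf) hsfdef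
  have hα₂m : α₂ ∈ tropD val f γ := hmem sf _ (sf.max'_mem hsf) hsfdef
  have hβ₁m : β₁ ∈ tropD val g γ := hmemg sg _ (sg.min'_mem hsg) hsgdef
  have hβ₂m : β₂ ∈ tropD val g γ := hmemg sg _ (sg.max'_mem hsg) hsgdef
  have hlbf : ∀ a ∈ tropD val f γ, toLex α₁ ≤ toLex a := fun a ha =>
    sf.min'_le _ (Finset.mem_image_of_mem _ ((hDf a).mpr ha))
  have hubf : ∀ a ∈ tropD val f γ, toLex a ≤ toLex α₂ := fun a ha =>
    sf.le_max' _ (Finset.mem_image_of_mem _ ((hDf a).mpr ha))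
  have hlbg : ∀ a ∈ tropD val g γ, toLex β₁ ≤ toLex a := fun a ha =>
    sg.min'_le _ (Finset.mem_image_of_mem _ ((hDg a).mpr ha))
  have hubg : ∀ a ∈ tropD val g γ, toLex a ≤ toLex β₂ := fun a ha =>
    sg.le_max' _ (Finset.mem_image_of_mem _ ((hDg a).mpr ha))
  have H₁ : ∀ a b : Fin N → ℤ, a ∈ tropD val f γ → b ∈ tropD val g γ →
      a + b = α₁ + β₁ → a = α₁ := by
    intro a b ha hb hab
    refine toLex.injective (le_antisymm ?_ (hlbf a ha))
    by_contra hcon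
    push_neg at hcon
    have hlt : toLex α₁ + toLex β₁ < toLex a + toLex b :=
      add_lt_add_of_lt_of_le hcon (hlbg b hb)
    rw [← toLex_add, ← toLex_add, hab] at hlt
    exact lt_irrefl _ hlt
  have H₂ : ∀ a b : Fin N → ℤ, a ∈ tropD val f γ → b ∈ tropD val g γ →
      a + b = α₂ + β₂ → a = α₂ := by
    intro a b ha hb hab
    refine toLex.injective (le_antisymm (hubf a ha) ?_)
    by_contra hcon
    push_neg at hcon
    have hlt : toLex a + toLex b < toLex α₂ + toLex β₂ :=
      add_lt_add_of_lt_of_le hcon (hubg b hb)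
    rw [← toLex_add, ← toLex_add, hab] at hlt
    exact lt_irrefl _ hlt
  have m1 := (trop_mul_key_aux val hval0 hvalmul hvaladd f g γ α₁ β₁ hα₁m hβ₁m H₁).1
  have m2 := (trop_mul_key_aux val hval0 hvalmul hvaladd f g γ α₂ β₂ hα₂m hβ₂m H₂).1
  -- the two extremal pairs have distinct sums
  have hα₁₂ : toLex α₁ < toLex α₂ := by
    rcases lt_or_eq_of_le (sf.min'_le (sf.max' hsf) (sf.max'_mem hsf)) with h | h
    · exact h
    · exfalso
      apply hαβne
      have h1 : toLex α₁ ≤ toLex α := hlbf α hαm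
      have h2 : toLex α ≤ toLex α₂ := hubf α hαm
      have h3 : toLex α₁ ≤ toLex β := hlbf β hβm
      have h4 : toLex β ≤ toLex α₂ := hubf β hβm
      have hh : (toLex α₁ : Lex (Fin N → ℤ)) = toLex α₂ := h
      have : toLex α = toLex β :=
        le_antisymm (le_trans h2 (hh ▸ h3)) (le_trans h4 (hh ▸ h1))
      exact toLex.injective this
  have hsumlt : toLex (α₁ + β₁) < toLex (α₂ + β₂) := by
    rw [toLex_add, toLex_add]
    exact add_lt_add_of_lt_of_le hα₁₂ (sg.min'_le (sg.max' hsg) (sg.max'_mem hsg))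
  exact ⟨α₁ + β₁, α₂ + β₂, fun h => (ne_of_lt hsumlt) (congrArg toLex h), m1, m2⟩

end Aux

/-- The hypersurface associated to the tropicalization of a product is the union of
those of the factors: `V(T(fg)) = V(Tf) ∪ V(Tg)`. -/
theorem tropV_mul {Γ : Type*} [AddCommGroup Γ] [LinearOrder Γ] [IsOrderedAddMonoid Γ]
    {K : Type*} [Field K] {N : ℕ}
    (val : K → WithTop Γ)
    (hval0 : ∀ x : K, val x = ⊤ ↔ x = 0)
    (hvalmul : ∀ x y : K, val (x * y) = val x + val y)
    (hvaladd : ∀ x y : K, min (val x) (val y) ≤ val (x + y))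
    (f g : AddMonoidAlgebra K (Fin N → ℤ)) (hf : f ≠ 0) (hg : g ≠ 0) :
    tropV val (f * g) = tropV val f ∪ tropV val g := by
  classical
  ext γ
  simp only [Set.mem_union]
  constructor
  · intro hγ
    by_contra hnot
    push_neg at hnot
    obtain ⟨hnf, hng⟩ := hnot
    obtain ⟨α', hα⟩ := tropD_nonempty_aux val f hf γ
    obtain ⟨β', hβ⟩ := tropD_nonempty_aux val g hg γ
    have huf : ∀ a ∈ tropD val f γ, a = α' := by
      intro a ha
      by_contra hne
      exact hnf ⟨a, α', hne, ha, hα⟩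
    have hug : ∀ b ∈ tropD val g γ, b = β' := by
      intro b hb
      by_contra hne
      exact hng ⟨b, β', hne, hb, hβ⟩
    obtain ⟨δ₁, δ₂, hne, h1, h2⟩ := hγ
    have e1 := trop_mul_D_subset_aux val hval0 hvalmul hvaladd f g γ α' β' hα hβ huf hug δ₁ h1
    have e2 := trop_mul_D_subset_aux val hval0 hvalmul hvaladd f g γ α' β' hα hβ huf hug δ₂ h2
    exact hne (e1.trans e2.symm)
  · rintro (hγ | hγ)
    · exact tropV_subset_mul_aux val hval0 hvalmul hvaladd f g hg hγ
    · have := tropV_subset_mul_aux val hval0 hvalmul hvaladd g f hf hγ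
      rwa [mul_comm] at this
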